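/- Let m ≥ 4 be even. The number of orbits of the action of the dihedral group D_m on {1,-1}^m equals (1/(2m)) · (2^m + (m/2 + 1)·2^{m/2} + 2·Σ_{i=1}^{m/2 - 1} 2^{gcd(i,m)}). -/

import Mathlib

/-- The action of the dihedral group `D_m` on `{1,-1}^m` (tuples indexed by `ZMod m`,
with position `i ∈ {1,…,m}` identified with `(i : ZMod m)`), where the rotation
`r = r 1` acts by `r(δ₁,…,δₘ) = (δₘ, δ₁, …, δ_{m-1})` and the reflection `f = sr 0`
acts by `f(δ₁,…,δₘ) = (-δₘ, …, -δ₂, -δ₁)`, i.e. `f(δ)ᵢ = -δ_{m+1-i}`. -/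
def dact {m : ℕ} : DihedralGroup m → (ZMod m → ℤˣ) → (ZMod m → ℤˣ)
  | .r i, δ => fun j => δ (j - i)
  | .sr i, δ => fun j => -δ (1 - i - j)

/-- The orbit of `δ` under the action of the dihedral group on `{1,-1}^m`. -/
def dihedralOrbit {m : ℕ} (δ : ZMod m → ℤˣ) : Set (ZMod m → ℤˣ) :=
  {δ' | ∃ σ : DihedralGroup m, dact σ δ = δ'}

section Aux

variable {m : ℕ}

instance dactMulAction {m : ℕ} : MulAction (DihedralGroup m) (ZMod m → ℤˣ) where
  smul := dact
  one_smul δ := by funext j; show δ (j - 0) = δ j; rw [sub_zero]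
  mul_smul a b δ := by
    rcases a with i | i <;> rcases b with k | k <;> funext j <;>
      show dact _ δ j = dact _ (dact _ δ) j <;>
      simp only [DihedralGroup.r_mul_r, DihedralGroup.r_mul_sr, DihedralGroup.sr_mul_r,
        DihedralGroup.sr_mul_sr, dact, neg_neg] <;>
      congr 1 <;> ring

lemma dact_smul (σ : DihedralGroup m) (δ : ZMod m → ℤˣ) : σ • δ = dact σ δ := rfl

/-- the additive subgroup of periods of `δ` -/
def periodSub (δ : ZMod m → ℤˣ) : AddSubgroup (ZMod m) where
  carrier := {g | ∀ j, δ (j + g) = δ j}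
  zero_mem' := by intro j; rw [add_zero]
  add_mem' := by
    intro g h hg hh j
    rw [← add_assoc, hh (j + g)]
    exact hg j
  neg_mem' := by
    intro g hg j
    have := hg (j + -g)
    rw [add_assoc, neg_add_cancel, add_zero] at this
    exact this.symm

lemma mem_periodSub_iff_gcd [NeZero m] (δ : ZMod m → ℤˣ) (i : ZMod m) :
    i ∈ periodSub δ ↔ ((Nat.gcd i.val m : ℕ) : ZMod m) ∈ periodSub δ := by
  constructor
  · intro hi
    have hz : ((Nat.gcd i.val m : ℕ) : ZMod m) = (Nat.gcdA i.val m) • i := by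
      have := Nat.gcd_eq_gcd_ab i.val m
      have h2 : ((Nat.gcd i.val m : ℤ) : ZMod m)
          = ((i.val * Nat.gcdA i.val m + m * Nat.gcdB i.val m : ℤ) : ZMod m) := by
        exact_mod_cast congrArg (fun z : ℤ => (z : ZMod m)) this
      push_cast at h2
      rw [ZMod.natCast_self] at h2
      rw [h2, ZMod.natCast_val, ZMod.cast_id, zsmul_eq_mul]
      ring
    rw [hz]
    exact zsmul_mem hi _
  · intro h
    have : i = (i.val / Nat.gcd i.val m) • ((Nat.gcd i.val m : ℕ) : ZMod m) := by
      rw [nsmul_eq_mul]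
      rw [← Nat.cast_mul, Nat.div_mul_cancel (Nat.gcd_dvd_left _ _), ZMod.natCast_val,
        ZMod.cast_id]
    rw [this]
    exact nsmul_mem h _

lemma periodic_nat (δ : ZMod m → ℤˣ) (d : ZMod m) (h : ∀ j, δ (j + d) = δ j) :
    ∀ (n : ℕ) (j : ZMod m), δ (j + d * n) = δ j := by
  intro n
  induction n with
  | zero => intro j; simp
  | succ n ih =>
    intro j
    have : d * (((n : ℕ) + 1 : ℕ) : ZMod m) = d * n + d := by push_cast; ring
    rw [this, ← add_assoc, h (j + d * n), ih j]

lemma card_periodic [NeZero m] (d : ℕ) (hd : 0 < d) (hdm : d ∣ m) :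
    Nat.card {δ : ZMod m → ℤˣ // ∀ j, δ (j + (d : ZMod m)) = δ j} = 2 ^ d := by
  haveI : NeZero d := ⟨hd.ne'⟩
  have key : ∀ (δ : ZMod m → ℤˣ), (∀ j, δ (j + (d : ZMod m)) = δ j) →
      ∀ j : ZMod m, δ ((j.val % d : ℕ) : ZMod m) = δ j := by
    intro δ hδ j
    conv_rhs => rw [← ZMod.natCast_rightInverse j, ← Nat.mod_add_div j.val d]
    push_cast
    rw [periodic_nat δ _ hδ (j.val / d) _]
  have hcast : ∀ j : ZMod m, ZMod.castHom hdm (ZMod d) j = ((j.val : ℕ) : ZMod d) := by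
    intro j
    rw [ZMod.castHom_apply, ← ZMod.natCast_val]
  let e : {δ : ZMod m → ℤˣ // ∀ j, δ (j + (d : ZMod m)) = δ j} ≃ (ZMod d → ℤˣ) :=
    { toFun := fun δ k => δ.1 ((k.val : ZMod m))
      invFun := fun ε => ⟨fun j => ε (ZMod.castHom hdm (ZMod d) j), by
        intro j
        have h2 : ZMod.castHom hdm (ZMod d) (j + (d : ZMod m)) = ZMod.castHom hdm (ZMod d) j := by
          rw [map_add, map_natCast, ZMod.natCast_self, add_zero]
        show ε (ZMod.castHom hdm (ZMod d) (j + (d : ZMod m))) = ε (ZMod.castHom hdm (ZMod d) j)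
        rw [h2]⟩
      left_inv := by
        intro δ
        apply Subtype.ext
        funext j
        simp only
        rw [hcast, ZMod.val_natCast]
        exact key δ.1 δ.2 j
      right_inv := by
        intro ε
        funext k
        simp only
        rw [hcast, ZMod.val_natCast,
          Nat.mod_eq_of_lt (lt_of_lt_of_le k.val_lt
            (Nat.le_of_dvd (Nat.pos_of_ne_zero (NeZero.ne m)) hdm))]
        congr 1
        exact ZMod.natCast_rightInverse k }
  rw [Nat.card_congr e]
  simp [Nat.card_eq_fintype_card]

lemma val_sub_parity [NeZero m] (hm2 : 2 ∣ m) (a b : ZMod m) :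
    a.val % 2 = ((a - b).val + b.val) % 2 := by
  have h : a = (a - b) + b := by ring
  have : a.val = ((a - b).val + b.val) % m := by
    conv_lhs => rw [h]
    exact ZMod.val_add _ _
  rw [this, Nat.mod_mod_of_dvd _ hm2]

lemma card_even_subtype [NeZero m] (hm2 : 2 ∣ m) :
    Nat.card {j : ZMod m // j.val % 2 = 0} = m / 2 := by
  have hmpos : 0 < m := Nat.pos_of_ne_zero (NeZero.ne m)
  let e : Fin (m / 2) ≃ {j : ZMod m // j.val % 2 = 0} :=
    { toFun := fun k => ⟨((2 * k : ℕ) : ZMod m), by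
        rw [ZMod.val_natCast, Nat.mod_eq_of_lt (by omega : 2 * (k : ℕ) < m)]
        omega⟩
      invFun := fun j => ⟨j.1.val / 2, by
        have := j.1.val_lt
        have := j.2
        omega⟩
      left_inv := by
        intro k
        apply Fin.ext
        simp only
        rw [ZMod.val_natCast, Nat.mod_eq_of_lt (by omega : 2 * (k : ℕ) < m)]
        omega
      right_inv := by
        intro j
        apply Subtype.ext
        simp only
        have h2 : 2 * (j.1.val / 2) = j.1.val := by have := j.2; omega
        rw [h2, ZMod.natCast_rightInverse] }
  rw [← Nat.card_congr e, Nat.card_eq_fintype_card, Fintype.card_fin]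

lemma card_refl_even [NeZero m] (c : ZMod m) (hc : c.val % 2 = 0) :
    Nat.card {δ : ZMod m → ℤˣ // ∀ j, δ (c - j) = -δ j} = 0 := by
  haveI : IsEmpty {δ : ZMod m → ℤˣ // ∀ j, δ (c - j) = -δ j} := by
    constructor
    rintro ⟨δ, hδ⟩
    set j0 : ZMod m := ((c.val / 2 : ℕ) : ZMod m) with hj0
    have h2 : j0 + j0 = c := by
      rw [hj0, ← Nat.cast_add]
      have : c.val / 2 + c.val / 2 = c.val := by omega
      rw [this]
      exact ZMod.natCast_rightInverse c
    have h3 : c - j0 = j0 := by rw [← h2]; ring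
    have := hδ j0
    rw [h3] at this
    have h4 : (δ j0 : ℤ) = -(δ j0 : ℤ) := by exact_mod_cast congrArg Units.val this
    have h5 : (δ j0 : ℤ) ≠ 0 := (δ j0).ne_zero
    omega
  simp

lemma card_refl_odd [NeZero m] (hm2 : 2 ∣ m) (c : ZMod m) (hc : c.val % 2 = 1) :
    Nat.card {δ : ZMod m → ℤˣ // ∀ j, δ (c - j) = -δ j} = 2 ^ (m / 2) := by
  have hpar : ∀ j : ZMod m, (c - j).val % 2 = (1 + j.val) % 2 := by
    intro j
    have := val_sub_parity hm2 c j
    omega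
  have hcc : ∀ j : ZMod m, c - (c - j) = j := by intro j; ring
  let e : {δ : ZMod m → ℤˣ // ∀ j, δ (c - j) = -δ j} ≃ ({j : ZMod m // j.val % 2 = 0} → ℤˣ) :=
    { toFun := fun δ p => δ.1 p.1
      invFun := fun η => ⟨fun j => if h : j.val % 2 = 0 then η ⟨j, h⟩
          else -η ⟨c - j, by have := hpar j; omega⟩, by
        intro j
        by_cases h : j.val % 2 = 0
        · have h' : ¬ ((c - j).val % 2 = 0) := by have := hpar j; omega
          simp only [dif_neg h', dif_pos h, hcc j]
        · have h' : (c - j).val % 2 = 0 := by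
            have := hpar j; have := Nat.mod_two_eq_zero_or_one j.val; omega
          simp only [dif_pos h', dif_neg h, neg_neg]⟩
      left_inv := by
        intro δ
        apply Subtype.ext
        funext j
        simp only
        by_cases h : j.val % 2 = 0
        · rw [dif_pos h]
        · rw [dif_neg h, δ.2 j, neg_neg]
      right_inv := by
        intro η
        funext p
        simp only [dif_pos p.2] }
  rw [Nat.card_congr e, Nat.card_eq_fintype_card, Fintype.card_fun]
  have : Fintype.card {j : ZMod m // j.val % 2 = 0} = m / 2 := by
    rw [← Nat.card_eq_fintype_card]
    exact card_even_subtype hm2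
  rw [this]
  simp

lemma card_fixedBy_r [NeZero m] (i : ZMod m) :
    Nat.card (MulAction.fixedBy (ZMod m → ℤˣ) (DihedralGroup.r i)) = 2 ^ Nat.gcd i.val m := by
  have hiff : ∀ δ : ZMod m → ℤˣ, δ ∈ MulAction.fixedBy (ZMod m → ℤˣ) (DihedralGroup.r i) ↔
      ∀ j, δ (j + ((Nat.gcd i.val m : ℕ) : ZMod m)) = δ j := by
    intro δ
    rw [MulAction.mem_fixedBy, dact_smul]
    constructor
    · intro h j
      have h1 : ∀ j, δ (j - i) = δ j := fun j => congrFun h j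
      have h2 : (-i) ∈ periodSub δ := by
        intro j
        rw [← sub_eq_add_neg]
        exact h1 j
      have h3 : i ∈ periodSub δ := by
        have := neg_mem h2
        rwa [neg_neg] at this
      exact (mem_periodSub_iff_gcd δ i).mp h3 j
    · intro h
      have h3 : i ∈ periodSub δ := (mem_periodSub_iff_gcd δ i).mpr h
      funext j
      show δ (j - i) = δ j
      have := h3 (j - i)
      rw [sub_add_cancel] at this
      exact this.symm
  rw [Nat.card_congr (Equiv.subtypeEquivRight hiff)]
  exact card_periodic _ (Nat.gcd_pos_of_pos_right _ (Nat.pos_of_ne_zero (NeZero.ne m)))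
    (Nat.gcd_dvd_right _ _)

lemma fixedBy_sr_iff (i : ZMod m) (δ : ZMod m → ℤˣ) :
    δ ∈ MulAction.fixedBy (ZMod m → ℤˣ) (DihedralGroup.sr i) ↔
      ∀ j, δ ((1 - i) - j) = -δ j := by
  rw [MulAction.mem_fixedBy, dact_smul]
  constructor
  · intro h j
    have h1 : -δ (1 - i - j) = δ j := congrFun h j
    show δ (1 - i - j) = -δ j
    rw [← h1, neg_neg]
  · intro h
    funext j
    show -δ (1 - i - j) = δ j
    rw [h j, neg_neg]

lemma card_fixedBy_sr [NeZero m] (hm2 : 2 ∣ m) (i : ZMod m) :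
    Nat.card (MulAction.fixedBy (ZMod m → ℤˣ) (DihedralGroup.sr i)) =
      if (1 - i).val % 2 = 1 then 2 ^ (m / 2) else 0 := by
  rw [Nat.card_congr (Equiv.subtypeEquivRight (fixedBy_sr_iff i))]
  by_cases h : (1 - i).val % 2 = 1
  · rw [if_pos h]
    exact card_refl_odd hm2 _ h
  · rw [if_neg h]
    exact card_refl_even _ (by omega : (1 - i).val % 2 = 0)

private def dihedralSumEquiv : (ZMod m) ⊕ (ZMod m) ≃ DihedralGroup m where
  toFun i := match i with
    | Sum.inl j => .r j
    | Sum.inr j => .sr j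
  invFun i := match i with
    | .r j => Sum.inl j
    | .sr j => Sum.inr j
  left_inv := by rintro (x | x) <;> rfl
  right_inv := by rintro (x | x) <;> rfl

lemma gcd_sub_self (k : ℕ) (h1 : 0 < k) (h2 : k < m) : Nat.gcd (m - k) m = Nat.gcd k m := by
  apply Nat.dvd_antisymm
  · apply Nat.dvd_gcd
    · have := Nat.dvd_sub (Nat.gcd_dvd_right (m - k) m) (Nat.gcd_dvd_left (m - k) m)
      rwa [Nat.sub_sub_self h2.le] at this
    · exact Nat.gcd_dvd_right _ _
  · apply Nat.dvd_gcd
    · exact Nat.dvd_sub (Nat.gcd_dvd_right k m) (Nat.gcd_dvd_left k m)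
    · exact Nat.gcd_dvd_right _ _

end Aux

/-- For even `m ≥ 4`, the number of orbits of the dihedral action on `{1,-1}^m` equals
`(1/(2m)) · (2^m + (m/2 + 1)·2^{m/2} + 2·Σ_{i=1}^{m/2-1} 2^{gcd(i,m)})`. -/
theorem orbit_count_even (m : ℕ) (hm : 4 ≤ m) (heven : Even m) :
    (Set.ncard (Set.range (dihedralOrbit (m := m))) : ℚ) =
      (1 / (2 * m)) *
        (2 ^ m + ((m / 2 : ℕ) + 1) * 2 ^ (m / 2) +
          2 * ∑ i ∈ Finset.Icc 1 (m / 2 - 1), (2 : ℚ) ^ Nat.gcd i m) := by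
  haveI : NeZero m := ⟨by omega⟩
  have hm2 : 2 ∣ m := heven.two_dvd
  -- identify the range of dihedralOrbit with the orbit space
  have horb : ∀ δ : ZMod m → ℤˣ, dihedralOrbit δ = MulAction.orbit (DihedralGroup m) δ := by
    intro δ
    ext δ'
    simp only [dihedralOrbit, Set.mem_setOf_eq, MulAction.mem_orbit_iff, dact_smul]
  have hbij : Function.Bijective
      (fun q : MulAction.orbitRel.Quotient (DihedralGroup m) (ZMod m → ℤˣ) =>
        (⟨q.orbit, by
          induction q using Quotient.inductionOn' with
          | h δ =>
            refine ⟨δ, ?_⟩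
            rw [horb δ]
            exact (MulAction.orbitRel.Quotient.orbit_mk δ)⟩ :
          Set.range (dihedralOrbit (m := m)))) := by
    constructor
    · intro q1 q2 h
      induction q1 using Quotient.inductionOn' with
      | h δ1 =>
        induction q2 using Quotient.inductionOn' with
        | h δ2 =>
          have : MulAction.orbit (DihedralGroup m) δ1 = MulAction.orbit (DihedralGroup m) δ2 := by
            have := congrArg Subtype.val h
            simpa [MulAction.orbitRel.Quotient.orbit_mk] using this
          exact Quotient.sound' (MulAction.orbit_eq_iff.mp this)
    · rintro ⟨s, δ, rfl⟩
      refine ⟨Quotient.mk'' δ, ?_⟩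
      apply Subtype.ext
      simp [MulAction.orbitRel.Quotient.orbit_mk, horb δ]
  have hcard0 : Set.ncard (Set.range (dihedralOrbit (m := m))) =
      Nat.card (MulAction.orbitRel.Quotient (DihedralGroup m) (ZMod m → ℤˣ)) := by
    rw [← Nat.card_coe_set_eq]
    exact (Nat.card_congr (Equiv.ofBijective _ hbij)).symm
  haveI instFix : ∀ g : DihedralGroup m, Fintype (MulAction.fixedBy (ZMod m → ℤˣ) g) :=
    fun g => Fintype.ofFinite _
  haveI instΩ : Fintype (Quotient (MulAction.orbitRel (DihedralGroup m) (ZMod m → ℤˣ))) :=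
    Fintype.ofFinite _
  have burn := MulAction.sum_card_fixedBy_eq_card_orbits_mul_card_group
    (DihedralGroup m) (ZMod m → ℤˣ)
  rw [DihedralGroup.card] at burn
  -- rewrite the sum as Nat.card and split over r/sr
  have hsum : (∑ g : DihedralGroup m, Fintype.card (MulAction.fixedBy (ZMod m → ℤˣ) g)) =
      (∑ i : ZMod m, Nat.card (MulAction.fixedBy (ZMod m → ℤˣ) (DihedralGroup.r i))) +
      (∑ i : ZMod m, Nat.card (MulAction.fixedBy (ZMod m → ℤˣ) (DihedralGroup.sr i))) := by
    rw [← Fintype.sum_equiv (dihedralSumEquiv (m := m))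
      (fun x => Fintype.card (MulAction.fixedBy (ZMod m → ℤˣ) (dihedralSumEquiv x)))
      (fun g => Fintype.card (MulAction.fixedBy (ZMod m → ℤˣ) g)) (fun x => rfl),
      Fintype.sum_sum_type]
    simp only [Nat.card_eq_fintype_card]
    rfl
  -- rotation part
  have hrot : (∑ i : ZMod m, Nat.card (MulAction.fixedBy (ZMod m → ℤˣ) (DihedralGroup.r i))) =
      ∑ k ∈ Finset.range m, 2 ^ Nat.gcd k m := by
    simp only [card_fixedBy_r]
    refine Finset.sum_nbij' (fun i : ZMod m => i.val) (fun k : ℕ => (k : ZMod m))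
      ?_ ?_ ?_ ?_ ?_
    · intro i _
      exact Finset.mem_range.mpr i.val_lt
    · intro k hk
      exact Finset.mem_univ _
    · intro i _
      exact ZMod.natCast_rightInverse i
    · intro k hk
      exact ZMod.val_natCast_of_lt (Finset.mem_range.mp hk)
    · intro i _
      rfl
  -- reflection part
  have hrefl : (∑ i : ZMod m, Nat.card (MulAction.fixedBy (ZMod m → ℤˣ) (DihedralGroup.sr i))) =
      (m / 2) * 2 ^ (m / 2) := by
    have h1 : ∀ i : ZMod m, Nat.card (MulAction.fixedBy (ZMod m → ℤˣ) (DihedralGroup.sr i)) =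
        (fun c : ZMod m => if c.val % 2 = 1 then 2 ^ (m / 2) else 0) (1 - i) :=
      fun i => card_fixedBy_sr hm2 i
    rw [Finset.sum_congr rfl (fun i _ => h1 i)]
    have h2 : (∑ i : ZMod m, if (1 - i).val % 2 = 1 then 2 ^ (m / 2) else 0) =
        ∑ c : ZMod m, if c.val % 2 = 1 then 2 ^ (m / 2) else 0 :=
      Fintype.sum_equiv (Equiv.subLeft (1 : ZMod m))
        (fun i => if (1 - i).val % 2 = 1 then 2 ^ (m / 2) else 0)
        (fun c => if c.val % 2 = 1 then 2 ^ (m / 2) else 0) (fun x => rfl)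
    rw [h2]
    rw [Finset.sum_ite, Finset.sum_const, Finset.sum_const_zero, add_zero, smul_eq_mul]
    congr 1
    -- number of odd-val elements is m / 2
    have heven : (Finset.univ.filter (fun c : ZMod m => c.val % 2 = 0)).card = m / 2 := by
      rw [← Fintype.card_subtype, ← Nat.card_eq_fintype_card]
      exact card_even_subtype hm2
    have htot := Finset.card_filter_add_card_filter_not
      (s := (Finset.univ : Finset (ZMod m))) (p := fun c : ZMod m => c.val % 2 = 1)
    have hne : (Finset.univ.filter (fun c : ZMod m => ¬ c.val % 2 = 1)).card =
        (Finset.univ.filter (fun c : ZMod m => c.val % 2 = 0)).card := by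
      congr 1
      apply Finset.filter_congr
      intro x _
      omega
    rw [Finset.card_univ, ZMod.card] at htot
    omega
  -- split the rotation sum
  have hIcc : Finset.Icc 1 (m / 2 - 1) = Finset.Ico 1 (m / 2) := by
    rw [← Finset.Ico_add_one_right_eq_Icc]
    congr 1
    omega
  have hmirror : (∑ k ∈ Finset.Ico (m / 2 + 1) m, 2 ^ Nat.gcd k m) =
      ∑ k ∈ Finset.Ico 1 (m / 2), 2 ^ Nat.gcd k m := by
    refine Finset.sum_nbij' (fun k : ℕ => m - k) (fun k : ℕ => m - k) ?_ ?_ ?_ ?_ ?_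
    · intro k hk
      simp only [Finset.mem_Ico] at hk ⊢
      omega
    · intro k hk
      simp only [Finset.mem_Ico] at hk ⊢
      omega
    · intro k hk
      simp only [Finset.mem_Ico] at hk
      omega
    · intro k hk
      simp only [Finset.mem_Ico] at hk
      omega
    · intro k hk
      simp only [Finset.mem_Ico] at hk
      rw [gcd_sub_self k (by omega) (by omega)]
  have hsplit : (∑ k ∈ Finset.range m, 2 ^ Nat.gcd k m) =
      2 ^ m + 2 ^ (m / 2) + 2 * ∑ k ∈ Finset.Icc 1 (m / 2 - 1), 2 ^ Nat.gcd k m := by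
    rw [hIcc, Finset.range_eq_Ico,
      Finset.sum_eq_sum_Ico_succ_bot (by omega : 0 < m),
      ← Finset.sum_Ico_consecutive _ (by omega : 1 ≤ m / 2) (by omega : m / 2 ≤ m),
      Finset.sum_eq_sum_Ico_succ_bot (by omega : m / 2 < m), hmirror,
      Nat.gcd_zero_left, Nat.gcd_eq_left ⟨2, by omega⟩]
    ring
  -- put everything together
  have hN : Nat.card (MulAction.orbitRel.Quotient (DihedralGroup m) (ZMod m → ℤˣ)) =
      Fintype.card (Quotient (MulAction.orbitRel (DihedralGroup m) (ZMod m → ℤˣ))) :=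
    Nat.card_eq_fintype_card
  rw [hsum, hrot, hrefl, hsplit] at burn
  rw [hcard0, hN]
  have hfin : ((Fintype.card (Quotient (MulAction.orbitRel (DihedralGroup m)
      (ZMod m → ℤˣ))) : ℚ)) * (2 * m) =
      2 ^ m + ((m / 2 : ℕ) + 1) * 2 ^ (m / 2) +
        2 * ∑ i ∈ Finset.Icc 1 (m / 2 - 1), (2 : ℚ) ^ Nat.gcd i m := by
    have : ((2 ^ m + 2 ^ (m / 2) + 2 * ∑ k ∈ Finset.Icc 1 (m / 2 - 1), 2 ^ Nat.gcd k m
        + m / 2 * 2 ^ (m / 2) : ℕ) : ℚ) =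
        ((Fintype.card (Quotient (MulAction.orbitRel (DihedralGroup m)
          (ZMod m → ℤˣ))) * (2 * m) : ℕ) : ℚ) := by
      exact_mod_cast congrArg (fun n : ℕ => (n : ℚ)) burn
    push_cast at this
    rw [← this]
    ring
  have hm0 : (2 * (m : ℚ)) ≠ 0 := by
    have : (m : ℚ) ≠ 0 := Nat.cast_ne_zero.mpr (by omega)
    positivity
  rw [← hfin]
  field_simp
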